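/- Let f : ℝ^{n+m} → M be 1-Lipschitz into a metric space M, Q a cube of sidelength 1, and suppose that for all x, y on a common line intersecting 3Q^N with |x−y| ≥ α, the quotient |f(x)−f(y)|/|x−y| differs from a line-dependent constant σ(L) by at most ε′, and that σ(L) ≤ σ(L′) + ρ′ for all parallel lines L, L′ meeting Q. Then for all x, y ∈ Q with |x−y| ≥ α and all z with |z| ≤ 1, ||f(x+z)−f(y+z)| − |f(x)−f(y)|| ≤ 2ρ′′·|x−y|, where ρ′′ = ρ′ + ε′ is controlled by ρ′ and ε′. -/
import Mathlib


open Set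

lemma coord_le_norm' {k : ℕ} (z : EuclideanSpace ℝ (Fin k)) (i : Fin k) :
    |z i| ≤ ‖z‖ := by
  rw [EuclideanSpace.norm_eq, ← Real.sqrt_sq_eq_abs]
  apply Real.sqrt_le_sqrt
  have : z i ^ 2 = ‖z i‖ ^ 2 := by rw [Real.norm_eq_abs, sq_abs]
  rw [this]
  exact Finset.single_le_sum (fun j _ => sq_nonneg ‖z j‖) (Finset.mem_univ i)

/-- Translation invariance of difference quotients (eq. (shift-f) of Corollary 5.4):
let `f : ℝ^{n+m} → M` be `1`-Lipschitz, `Q = [0,1]^{n+m}`.  Suppose that every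
line `L` meeting `3Q^N` carries a constant `σ(L)` (depending only on the line,
encoded here as `σ p v` for the line through `p` with direction `v`) such that
the difference quotient of `f` at `α`-separated points of `L` differs from
`σ(L)` by at most `ε′`, and that `σ(L) ≤ σ(L′) + ρ′` for parallel lines `L, L′`
meeting `3Q`.  Then difference quotients change by at most `2(ρ′+ε′)·|x−y|`
under a common translation of the endpoints by `z`, `|z| ≤ 1`. -/
theorem difference_quotient_translation_invariance
    {n m : ℕ} {M : Type*} [MetricSpace M]
    (f : EuclideanSpace ℝ (Fin (n + m)) → M) (hf : LipschitzWith 1 f)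
    (N : ℕ) (α ε' ρ' : ℝ) (hα : 0 < α) (hε' : 0 ≤ ε') (hρ' : 0 ≤ ρ')
    (σ : EuclideanSpace ℝ (Fin (n + m)) → EuclideanSpace ℝ (Fin (n + m)) → ℝ)
    (hσ1 : ∀ p v : EuclideanSpace ℝ (Fin (n + m)), v ≠ 0 →
      (∃ t : ℝ, ∀ i, -((2:ℝ) ^ N) ≤ (p + t • v) i ∧ (p + t • v) i ≤ (2:ℝ) ^ (N + 1)) →
      ∀ s t : ℝ, α ≤ ‖(p + s • v) - (p + t • v)‖ →
        |dist (f (p + s • v)) (f (p + t • v)) - σ p v * ‖(p + s • v) - (p + t • v)‖|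
          ≤ ε' * ‖(p + s • v) - (p + t • v)‖)
    (hσ2 : ∀ p q v : EuclideanSpace ℝ (Fin (n + m)), v ≠ 0 →
      (∃ t : ℝ, ∀ i, (-1:ℝ) ≤ (p + t • v) i ∧ (p + t • v) i ≤ 2) →
      (∃ t : ℝ, ∀ i, (-1:ℝ) ≤ (q + t • v) i ∧ (q + t • v) i ≤ 2) →
      σ p v ≤ σ q v + ρ')
    (hN : (1:ℝ) ≤ (2:ℝ) ^ N) :
    ∀ x : EuclideanSpace ℝ (Fin (n + m)), (∀ i, 0 ≤ x i ∧ x i ≤ 1) →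
    ∀ y : EuclideanSpace ℝ (Fin (n + m)), (∀ i, 0 ≤ y i ∧ y i ≤ 1) →
      α ≤ ‖x - y‖ →
      ∀ z : EuclideanSpace ℝ (Fin (n + m)), ‖z‖ ≤ 1 →
        |dist (f (x + z)) (f (y + z)) - dist (f x) (f y)|
          ≤ 2 * (ρ' + ε') * ‖x - y‖ := by
  intro x hx y hy hxy z hz
  set v : EuclideanSpace ℝ (Fin (n + m)) := x - y with hv
  have hvnorm : 0 < ‖v‖ := lt_of_lt_of_le hα hxy
  have hvne : v ≠ 0 := by
    intro h; rw [h, norm_zero] at hvnorm; exact lt_irrefl 0 hvnorm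
  have h2N : (2:ℝ) ≤ (2:ℝ) ^ (N + 1) := by
    rw [pow_succ]
    nlinarith
  -- line through y, direction v : contains y (t=0) and x (t=1)
  have hyx : y + (1:ℝ) • v = x := by
    simp [hv]
  have hy0 : y + (0:ℝ) • v = y := by simp
  have hin1 : ∃ t : ℝ, ∀ i, -((2:ℝ) ^ N) ≤ (y + t • v) i ∧ (y + t • v) i ≤ (2:ℝ) ^ (N + 1) := by
    refine ⟨0, fun i => ?_⟩
    rw [hy0]
    constructor
    · linarith [(hy i).1]
    · linarith [(hy i).2]
  have key1 := hσ1 y v hvne hin1 1 0 (by rw [hyx, hy0]; exact hxy)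
  rw [hyx, hy0] at key1
  -- line through y + z, direction v : contains y+z (t=0) and x+z (t=1)
  have hzc : ∀ i, |z i| ≤ 1 := fun i => le_trans (coord_le_norm' z i) hz
  have hyzx : (y + z) + (1:ℝ) • v = x + z := by
    simp [hv]; abel
  have hyz0 : (y + z) + (0:ℝ) • v = y + z := by simp
  have hyzi : ∀ i, (-1:ℝ) ≤ (y + z) i ∧ (y + z) i ≤ 2 := by
    intro i
    have h1 := (hy i).1
    have h2 := (hy i).2
    have h3 := abs_le.mp (hzc i)
    have : (y + z) i = y i + z i := rfl
    rw [this]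
    constructor <;> linarith [h3.1, h3.2]
  have hin2 : ∃ t : ℝ, ∀ i, -((2:ℝ) ^ N) ≤ ((y + z) + t • v) i ∧ ((y + z) + t • v) i ≤ (2:ℝ) ^ (N + 1) := by
    refine ⟨0, fun i => ?_⟩
    rw [hyz0]
    constructor
    · linarith [(hyzi i).1]
    · linarith [(hyzi i).2]
  have hnormeq : ‖(x + z) - (y + z)‖ = ‖v‖ := by
    congr 1
    rw [hv]; abel
  have key2 := hσ1 (y + z) v hvne hin2 1 0 (by rw [hyzx, hyz0, hnormeq]; exact hxy)
  rw [hyzx, hyz0, hnormeq] at key2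
  -- σ comparison
  have hmem1 : ∃ t : ℝ, ∀ i, (-1:ℝ) ≤ (y + t • v) i ∧ (y + t • v) i ≤ 2 := by
    refine ⟨0, fun i => ?_⟩
    rw [hy0]
    exact ⟨by linarith [(hy i).1], by linarith [(hy i).2]⟩
  have hmem2 : ∃ t : ℝ, ∀ i, (-1:ℝ) ≤ ((y + z) + t • v) i ∧ ((y + z) + t • v) i ≤ 2 := by
    refine ⟨0, fun i => ?_⟩
    rw [hyz0]
    exact hyzi i
  have hs1 := hσ2 y (y + z) v hvne hmem1 hmem2
  have hs2 := hσ2 (y + z) y v hvne hmem2 hmem1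
  have habs1 := abs_le.mp key1
  have habs2 := abs_le.mp key2
  rw [abs_le]
  constructor
  · nlinarith [hvnorm.le]
  · nlinarith [hvnorm.le]
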